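/- For every rational number α ∉ {0, -1} (so the curve is nonsingular), the points P = (α, α), 2P = (0,0), 3P = (−1,−1), 4P = (0,−α), 5P = (α,−α²) lie on the elliptic curve E_α : Y² + (α−2)XY + αY = X³, and P is a torsion point of order 6. -/

import Mathlib

open WeierstrassCurve

private lemma some_congr {F : Type*} [Field F] {W : WeierstrassCurve.Affine F}
    {x₁ y₁ x₂ y₂ : F} (h₁ : W.Nonsingular x₁ y₁) (h₂ : W.Nonsingular x₂ y₂)
    (hx : x₁ = x₂) (hy : y₁ = y₂) :
    WeierstrassCurve.Affine.Point.some _ _ h₁ = WeierstrassCurve.Affine.Point.some _ _ h₂ := by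
  subst hx hy; rfl

/-- For rational `α ∉ {0, -1}`, the points `P = (α, α)`, `2P = (0,0)`, `3P = (−1,−1)`,
`4P = (0,−α)`, `5P = (α,−α²)` lie on the elliptic curve
`E_α : Y² + (α−2)XY + αY = X³`, and `P` is a torsion point of order 6. -/
theorem torsion_structure (α : ℚ) (hα0 : α ≠ 0) (hα1 : α ≠ -1)
    (W : WeierstrassCurve.Affine ℚ)
    (hW : W = { a₁ := α - 2, a₂ := 0, a₃ := α, a₄ := 0, a₆ := 0 }) :
    ∃ (h1 : W.Nonsingular α α) (h2 : W.Nonsingular 0 0) (h3 : W.Nonsingular (-1) (-1))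
      (h4 : W.Nonsingular 0 (-α)) (h5 : W.Nonsingular α (-α ^ 2)),
      2 • (WeierstrassCurve.Affine.Point.some _ _ h1) = WeierstrassCurve.Affine.Point.some _ _ h2 ∧
      3 • (WeierstrassCurve.Affine.Point.some _ _ h1) = WeierstrassCurve.Affine.Point.some _ _ h3 ∧
      4 • (WeierstrassCurve.Affine.Point.some _ _ h1) = WeierstrassCurve.Affine.Point.some _ _ h4 ∧
      5 • (WeierstrassCurve.Affine.Point.some _ _ h1) = WeierstrassCurve.Affine.Point.some _ _ h5 ∧
      addOrderOf (WeierstrassCurve.Affine.Point.some _ _ h1) = 6 := by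
  subst hW
  set W : WeierstrassCurve.Affine ℚ :=
    { a₁ := α - 2, a₂ := 0, a₃ := α, a₄ := 0, a₆ := 0 } with hWdef
  have hα1' : α + 1 ≠ 0 := fun h => hα1 (by linarith)
  have hαα : α * (α + 1) ≠ 0 := mul_ne_zero hα0 hα1'
  have h1 : W.Nonsingular α α := by
    simp only [Affine.nonsingular_iff, Affine.equation_iff, hWdef]
    exact ⟨by ring, Or.inl fun h => hαα (by nlinarith [h])⟩
  have h2 : W.Nonsingular 0 0 := by
    simp only [Affine.nonsingular_iff, Affine.equation_iff, hWdef]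
    exact ⟨by ring, Or.inr fun h => hα0 (by nlinarith [h])⟩
  have h3 : W.Nonsingular (-1) (-1) := by
    simp only [Affine.nonsingular_iff, Affine.equation_iff, hWdef]
    exact ⟨by ring, Or.inl fun h => hα1 (by nlinarith [h])⟩
  have h4 : W.Nonsingular 0 (-α) := by
    simp only [Affine.nonsingular_iff, Affine.equation_iff, hWdef]
    exact ⟨by ring, Or.inr fun h => hα0 (by nlinarith [h])⟩
  have h5 : W.Nonsingular α (-α ^ 2) := by
    simp only [Affine.nonsingular_iff, Affine.equation_iff, hWdef]
    exact ⟨by ring, Or.inr fun h => hαα (by nlinarith [h])⟩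
  refine ⟨h1, h2, h3, h4, h5, ?_⟩
  -- doubling
  have hne1 : (α : ℚ) ≠ W.negY α α := by
    simp only [Affine.negY, hWdef]
    intro h; exact hαα (by nlinarith [h])
  have hs2 : W.slope α α α α = 2 := by
    rw [Affine.slope_of_Y_ne rfl hne1]
    simp only [Affine.negY, hWdef]
    rw [div_eq_iff (by intro h; exact hαα (by nlinarith [h]))]
    ring
  have e2 : (Affine.Point.some _ _ h1) + (Affine.Point.some _ _ h1) = Affine.Point.some _ _ h2 := by
    rw [Affine.Point.add_self_of_Y_ne hne1]
    refine some_congr _ _ ?_ ?_ <;>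
      simp only [Affine.addX, Affine.addY, Affine.negAddY, Affine.negY, hs2] <;> simp only [hWdef] <;> ring
  have n2 : 2 • (Affine.Point.some _ _ h1) = Affine.Point.some _ _ h2 := by
    rw [two_nsmul]; exact e2
  -- 3P = 2P + P
  have hx20 : (0 : ℚ) ≠ α := fun h => hα0 h.symm
  have hs3 : W.slope 0 α 0 α = 1 := by
    rw [Affine.slope_of_X_ne hx20, div_eq_iff (by intro h; exact hα0 (by linarith))]
    ring
  have e3 : (Affine.Point.some _ _ h2) + (Affine.Point.some _ _ h1) = Affine.Point.some _ _ h3 := by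
    rw [Affine.Point.add_of_X_ne hx20]
    refine some_congr _ _ ?_ ?_ <;>
      simp only [Affine.addX, Affine.addY, Affine.negAddY, Affine.negY, hs3] <;> simp only [hWdef] <;> ring
  have n3 : 3 • (Affine.Point.some _ _ h1) = Affine.Point.some _ _ h3 := by
    rw [show (3 : ℕ) = 2 + 1 by rfl, add_nsmul, one_nsmul, n2]; exact e3
  -- 4P = 3P + P
  have hx31 : (-1 : ℚ) ≠ α := fun h => hα1 h.symm
  have hs4 : W.slope (-1) α (-1) α = 1 := by
    rw [Affine.slope_of_X_ne hx31, div_eq_iff (by intro h; exact hα1' (by linarith))]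
    ring
  have e4 : (Affine.Point.some _ _ h3) + (Affine.Point.some _ _ h1) = Affine.Point.some _ _ h4 := by
    rw [Affine.Point.add_of_X_ne hx31]
    refine some_congr _ _ ?_ ?_ <;>
      simp only [Affine.addX, Affine.addY, Affine.negAddY, Affine.negY, hs4] <;> simp only [hWdef] <;> ring
  have n4 : 4 • (Affine.Point.some _ _ h1) = Affine.Point.some _ _ h4 := by
    rw [show (4 : ℕ) = 3 + 1 by rfl, add_nsmul, one_nsmul, n3]; exact e4
  -- 5P = 4P + P
  have hs5 : W.slope 0 α (-α) α = 2 := by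
    rw [Affine.slope_of_X_ne hx20, div_eq_iff (by intro h; exact hα0 (by linarith))]
    ring
  have e5 : (Affine.Point.some _ _ h4) + (Affine.Point.some _ _ h1) = Affine.Point.some _ _ h5 := by
    rw [Affine.Point.add_of_X_ne hx20]
    refine some_congr _ _ ?_ ?_ <;>
      simp only [Affine.addX, Affine.addY, Affine.negAddY, Affine.negY, hs5] <;> simp only [hWdef] <;> ring
  have n5 : 5 • (Affine.Point.some _ _ h1) = Affine.Point.some _ _ h5 := by
    rw [show (5 : ℕ) = 4 + 1 by rfl, add_nsmul, one_nsmul, n4]; exact e5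
  -- 6P = 0
  have e6 : (Affine.Point.some _ _ h5) + (Affine.Point.some _ _ h1) = 0 := by
    refine Affine.Point.add_of_Y_eq rfl ?_
    simp only [Affine.negY, hWdef]; ring
  have n6 : 6 • (Affine.Point.some _ _ h1) = 0 := by
    rw [show (6 : ℕ) = 5 + 1 by rfl, add_nsmul, one_nsmul, n5]; exact e6
  refine ⟨n2, n3, n4, n5, ?_⟩
  rw [addOrderOf_eq_iff (by norm_num)]
  refine ⟨n6, ?_⟩
  intro m hm6 hm0
  interval_cases m
  · rw [one_nsmul]; exact Affine.Point.some_ne_zero h1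
  · rw [n2]; exact Affine.Point.some_ne_zero h2
  · rw [n3]; exact Affine.Point.some_ne_zero h3
  · rw [n4]; exact Affine.Point.some_ne_zero h4
  · rw [n5]; exact Affine.Point.some_ne_zero h5
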